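/- arXiv:2504.11107 — 2 statements merged into one kernel-verified Lean document; each statement's English description precedes it below -/
import Mathlib

section
/- For every B > 0 there exists a constant C > 0 such that for all δ ∈ (0,1], ∑_{n=1}^∞ exp(−B·(log₊ n)^{3/2}/√δ) ≤ C·δ^{1/3}. -/
/-- For every `B > 0` there is `C > 0` such that for all `δ ∈ (0,1]`,
`∑_{n=1}^∞ exp(−B (log₊ n)^{3/2} / √δ) ≤ C δ^{1/3}`. -/
theorem stmt_7 (B : ℝ) (hB : 0 < B) :
    ∃ C : ℝ, 0 < C ∧ ∀ δ : ℝ, δ ∈ Set.Ioc (0:ℝ) 1 →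
      ∑' n : ℕ,
          Real.exp (-(B * Real.log (max ((n : ℝ) + 1) (Real.exp 1)) ^ ((3:ℝ)/2)
            / Real.sqrt δ))
        ≤ C * δ ^ ((1:ℝ)/3) := by
  set L : ℕ → ℝ := fun n => Real.log (max ((n : ℝ) + 1) (Real.exp 1)) with hLdef
  have hL1 : ∀ n, 1 ≤ L n := by
    intro n
    calc (1:ℝ) = Real.log (Real.exp 1) := (Real.log_exp 1).symm
      _ ≤ L n := Real.log_le_log (Real.exp_pos 1) (le_max_right _ _)
  have hLlog : ∀ n : ℕ, Real.log ((n:ℝ)+1) ≤ L n := fun n =>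
    Real.log_le_log (by positivity) (le_max_left _ _)
  set T : ℝ := max 1 ((4/B)^2) with hTdef
  have hT1 : (1:ℝ) ≤ T := le_max_left _ _
  set g : ℕ → ℝ := fun n => Real.exp (-(B/2 * L n ^ ((3:ℝ)/2))) with hgdef
  -- pointwise bound on g
  have hgle : ∀ n, g n ≤ Real.exp (2*T) * ((n:ℝ)+1) ^ (-2 : ℝ) := by
    intro n
    have hLn := hL1 n
    have hLpos : 0 < L n := lt_of_lt_of_le one_pos hLn
    have key : 2 * L n ≤ B/2 * L n ^ ((3:ℝ)/2) + 2*T := by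
      rcases le_total (L n) T with h | h
      · have : (0:ℝ) ≤ B/2 * L n ^ ((3:ℝ)/2) := by positivity
        nlinarith
      · have h32 : L n ^ ((3:ℝ)/2) = L n * Real.sqrt (L n) := by
          rw [Real.sqrt_eq_rpow, ← Real.rpow_one_add' (le_of_lt hLpos) (by norm_num)]
          norm_num
        have hs : 4/B ≤ Real.sqrt (L n) := by
          have h1 : Real.sqrt ((4/B)^2) ≤ Real.sqrt (L n) :=
            Real.sqrt_le_sqrt (le_trans (le_max_right _ _) h)
          rwa [Real.sqrt_sq (by positivity)] at h1
        have h2 : 2 * L n ≤ B/2 * (L n * Real.sqrt (L n)) := by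
          have h3 : L n * (4/B) ≤ L n * Real.sqrt (L n) :=
            mul_le_mul_of_nonneg_left hs (le_of_lt hLpos)
          calc 2 * L n = B/2 * (L n * (4/B)) := by field_simp; ring
            _ ≤ B/2 * (L n * Real.sqrt (L n)) := by nlinarith
        rw [h32]; linarith
    have hlog : 2 * Real.log ((n:ℝ)+1) ≤ B/2 * L n ^ ((3:ℝ)/2) + 2*T := by
      have := hLlog n; linarith
    have hrw : ((n:ℝ)+1) ^ (-2 : ℝ) = Real.exp (-(2 * Real.log ((n:ℝ)+1))) := by
      rw [Real.rpow_def_of_pos (by positivity)]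
      ring_nf
    calc g n ≤ Real.exp (2*T - 2 * Real.log ((n:ℝ)+1)) := by
          apply Real.exp_le_exp.mpr; linarith
      _ = Real.exp (2*T) * ((n:ℝ)+1) ^ (-2 : ℝ) := by
          rw [hrw, ← Real.exp_add]; ring_nf
  -- summability of g
  have hbound_summable : Summable (fun n : ℕ => Real.exp (2*T) * ((n:ℝ)+1) ^ (-2 : ℝ)) := by
    apply Summable.mul_left
    have h0 : Summable (fun n : ℕ => (n:ℝ) ^ (-2 : ℝ)) :=
      Real.summable_nat_rpow.mpr (by norm_num)
    have h1 : Summable (fun n : ℕ => ((n+1 : ℕ):ℝ) ^ (-2 : ℝ)) :=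
      (summable_nat_add_iff 1).mpr h0
    convert h1 using 2 with n
    · rfl
    push_cast; ring
  have hgsum : Summable g :=
    Summable.of_nonneg_of_le (fun n => (Real.exp_pos _).le) hgle hbound_summable
  set S : ℝ := ∑' n, g n with hSdef
  have hSnonneg : 0 ≤ S := tsum_nonneg fun n => (Real.exp_pos _).le
  refine ⟨(2/B) * S + 1, by positivity, ?_⟩
  rintro δ ⟨hδ0, hδ1⟩
  have hs0 : 0 < Real.sqrt δ := Real.sqrt_pos.mpr hδ0
  have hs1 : Real.sqrt δ ≤ 1 := by
    rw [show (1:ℝ) = Real.sqrt 1 by simp]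
    exact Real.sqrt_le_sqrt hδ1
  set a : ℝ := Real.exp (-(B/2 / Real.sqrt δ)) with hadef
  -- pointwise bound on f
  have hfle : ∀ n : ℕ,
      Real.exp (-(B * L n ^ ((3:ℝ)/2) / Real.sqrt δ)) ≤ a * g n := by
    intro n
    have hLn := hL1 n
    have h1 : (1:ℝ) ≤ L n ^ ((3:ℝ)/2) := Real.one_le_rpow hLn (by norm_num)
    rw [hadef, hgdef, ← Real.exp_add]
    apply Real.exp_le_exp.mpr
    have e1 : B/2 / Real.sqrt δ ≤ B/2 * L n ^ ((3:ℝ)/2) / Real.sqrt δ := by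
      apply div_le_div_of_nonneg_right ?_ hs0.le
      nlinarith
    have e2 : B/2 * L n ^ ((3:ℝ)/2) ≤ B/2 * L n ^ ((3:ℝ)/2) / Real.sqrt δ := by
      rw [le_div_iff₀ hs0]
      have := mul_le_mul_of_nonneg_left hs1 (show (0:ℝ) ≤ B/2 * L n ^ ((3:ℝ)/2) by positivity)
      nlinarith
    have : B * L n ^ ((3:ℝ)/2) / Real.sqrt δ
        = B/2 * L n ^ ((3:ℝ)/2) / Real.sqrt δ + B/2 * L n ^ ((3:ℝ)/2) / Real.sqrt δ := by
      ring
    linarith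
  have hfsum : Summable (fun n : ℕ => Real.exp (-(B * L n ^ ((3:ℝ)/2) / Real.sqrt δ))) :=
    Summable.of_nonneg_of_le (fun n => (Real.exp_pos _).le) hfle (hgsum.mul_left a)
  have step1 : (∑' n : ℕ, Real.exp (-(B * L n ^ ((3:ℝ)/2) / Real.sqrt δ))) ≤ a * S := by
    calc (∑' n : ℕ, Real.exp (-(B * L n ^ ((3:ℝ)/2) / Real.sqrt δ)))
        ≤ ∑' n, a * g n := Summable.tsum_le_tsum hfle hfsum (hgsum.mul_left a)
      _ = a * S := tsum_mul_left
  -- bound a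
  have ha : a ≤ (2/B) * δ ^ ((1:ℝ)/3) := by
    have hx : 0 < B/2 / Real.sqrt δ := by positivity
    have h1 : a ≤ (B/2 / Real.sqrt δ)⁻¹ := by
      rw [hadef, Real.exp_neg]
      apply inv_anti₀ hx
      linarith [Real.add_one_le_exp (B/2 / Real.sqrt δ)]
    have h2 : (B/2 / Real.sqrt δ)⁻¹ = (2/B) * Real.sqrt δ := by
      field_simp
    have h3 : Real.sqrt δ ≤ δ ^ ((1:ℝ)/3) := by
      rw [Real.sqrt_eq_rpow]
      exact Real.rpow_le_rpow_of_exponent_ge hδ0 hδ1 (by norm_num)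
    calc a ≤ (2/B) * Real.sqrt δ := by rw [← h2]; exact h1
      _ ≤ (2/B) * δ ^ ((1:ℝ)/3) := by
          apply mul_le_mul_of_nonneg_left h3 (by positivity)
  have hδ13 : 0 < δ ^ ((1:ℝ)/3) := Real.rpow_pos_of_pos hδ0 _
  calc (∑' n : ℕ, Real.exp (-(B * L n ^ ((3:ℝ)/2) / Real.sqrt δ))) ≤ a * S := step1
    _ ≤ ((2/B) * δ ^ ((1:ℝ)/3)) * S := by
        apply mul_le_mul_of_nonneg_right ha hSnonneg
    _ = ((2/B) * S) * δ ^ ((1:ℝ)/3) := by ring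
    _ ≤ ((2/B) * S + 1) * δ ^ ((1:ℝ)/3) := by nlinarith
end

section
/- Let k ≥ 2 be a real number. For any measurable p : (0,T] → ℝ with p_t ≥ 0, ∫ p_t = 1 over the torus 𝕋, and sup-bound ‖p_t‖_∞ ≤ 2(t^{−1/2} ∨ 1), one has for any φ ∈ L^k([0,T]×𝕋) that the convolution J_φ(t,x) = ∫_0^t ∫_𝕋 p_{t−s}(x−y) φ(s,y) dy ds satisfies ‖J_φ‖_{C([0,T]×𝕋)} ≤ 3 ‖φ‖_{L^k([0,T]×𝕋)} · (T^{(2k−3)/(2k)} ∨ T). -/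
open MeasureTheory
open scoped ENNReal NNReal

instance : Fact ((0:ℝ) < 2) := ⟨by norm_num⟩

private lemma aux_rpow_le_max {t T e e0 : ℝ} (he0 : 0 ≤ e0) (h1 : e0 ≤ e) (h2 : e ≤ 1)
    (ht : 0 < t) (htT : t ≤ T) : t ^ e ≤ max (T ^ e0) T := by
  rcases le_total t 1 with h | h
  · calc t ^ e ≤ t ^ e0 := Real.rpow_le_rpow_of_exponent_ge ht h h1
      _ ≤ T ^ e0 := Real.rpow_le_rpow ht.le htT he0
      _ ≤ _ := le_max_left _ _
  · calc t ^ e ≤ t ^ (1:ℝ) := Real.rpow_le_rpow_of_exponent_le h h2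
      _ = t := Real.rpow_one t
      _ ≤ T := htT
      _ ≤ _ := le_max_right _ _

set_option maxHeartbeats 1000000 in
/-- Young-type bound: for a nonnegative probability kernel `p_t` on the torus
`𝕋 = ℝ/2ℤ` with `‖p_t‖_∞ ≤ 2(t^{−1/2} ∨ 1)`, and `φ ∈ L^k([0,T]×𝕋)` with
`k ≥ 2`, the convolution `J_φ(t,x) = ∫_0^t ∫_𝕋 p_{t−s}(x−y) φ(s,y) dy ds`
satisfies `‖J_φ‖_{C([0,T]×𝕋)} ≤ 3 ‖φ‖_{L^k} (T^{(2k−3)/(2k)} ∨ T)`. -/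
theorem stmt_10 (k T : ℝ) (hk : 2 ≤ k) (hT : 0 < T)
    (p : ℝ → AddCircle (2:ℝ) → ℝ)
    (hp_meas : Measurable (Function.uncurry p))
    (hp_nonneg : ∀ t ∈ Set.Ioc (0:ℝ) T, ∀ a, 0 ≤ p t a)
    (hp_int : ∀ t ∈ Set.Ioc (0:ℝ) T, ∫ a, p t a = 1)
    (hp_sup : ∀ t ∈ Set.Ioc (0:ℝ) T, ∀ a, p t a ≤ 2 * max (t ^ (-(1:ℝ)/2)) 1)
    (φ : ℝ → AddCircle (2:ℝ) → ℝ)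
    (hφ_meas : Measurable (Function.uncurry φ))
    (hφ : MeasureTheory.MemLp (Function.uncurry φ) (ENNReal.ofReal k)
      ((volume.restrict (Set.Icc (0:ℝ) T)).prod volume)) :
    ∀ t ∈ Set.Icc (0:ℝ) T, ∀ x : AddCircle (2:ℝ),
      |∫ s in Set.Ioc (0:ℝ) t, ∫ y, p (t - s) (x - y) * φ s y|
        ≤ 3 * (∫ s in Set.Icc (0:ℝ) T, ∫ y, |φ s y| ^ k) ^ (1/k)
            * max (T ^ ((2*k - 3)/(2*k))) T := by
  have hk0 : (0:ℝ) < k := by linarith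
  have hk1 : (1:ℝ) < k := by linarith
  have hkm1 : (0:ℝ) < k - 1 := by linarith
  set b : ℝ := 1 / (k - 1) with hb_def
  have hb0 : 0 < b := by positivity
  have hb1 : b ≤ 1 := by rw [hb_def, div_le_one hkm1]; linarith
  set a' : ℝ := 1 / (2 * (k - 1)) with ha_def
  have ha0 : 0 < a' := by positivity
  have hahalf : a' ≤ 1/2 := by
    rw [ha_def, div_le_div_iff₀ (by positivity) (by norm_num)]; linarith
  have hab : a' = b / 2 := by rw [ha_def, hb_def]; field_simp
  set kp : ℝ := k / (k - 1) with hkp_def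
  have hconj : kp.HolderConjugate k := by
    exact (Real.HolderConjugate.conjExponent hk1).symm
  have hkp_sub : kp - 1 = b := by rw [hkp_def, hb_def]; field_simp; ring
  have hinv_kp : 1 / kp = (k - 1) / k := by rw [hkp_def, one_div_div]
  set e0 : ℝ := (2*k - 3)/(2*k) with he0_def
  have he00 : 0 ≤ e0 := by rw [he0_def]; apply div_nonneg <;> linarith
  set c : ℝ := (k - 1) / k with hc_def
  have hc0 : 0 < c := by positivity
  have hc1 : c ≤ 1 := by rw [hc_def, div_le_one hk0]; linarith
  have he0c : e0 ≤ c := by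
    rw [he0_def, hc_def, div_le_div_iff₀ (by linarith) hk0]; nlinarith
  set Φ : ℝ := ∫ s in Set.Icc (0:ℝ) T, ∫ y, |φ s y| ^ k with hΦ_def
  have hΦ0 : 0 ≤ Φ := by
    apply integral_nonneg; intro s
    apply integral_nonneg; intro y
    positivity
  have hΦk0 : 0 ≤ Φ ^ (1/k) := Real.rpow_nonneg hΦ0 _
  have hmaxT : 0 ≤ max (T ^ e0) T := le_trans hT.le (le_max_right _ _)
  intro t ht x
  obtain ⟨ht0, htT⟩ := ht
  rcases eq_or_lt_of_le ht0 with h0 | h0t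
  · rw [← h0]
    simp only [Set.Ioc_self, Measure.restrict_empty, integral_zero_measure, abs_zero]
    have : 0 ≤ 3 * Φ ^ (1/k) * max (T ^ e0) T := by
      apply mul_nonneg (by positivity) hmaxT
    simpa [hΦ_def, he0_def] using this
  -- main case : 0 < t
  set μt : Measure (ℝ × AddCircle (2:ℝ)) :=
    (volume.restrict (Set.Ioc (0:ℝ) t)).prod volume with hμt_def
  set F : ℝ × AddCircle (2:ℝ) → ℝ≥0∞ :=
    fun z => ENNReal.ofReal (p (t - z.1) (x - z.2)) with hF_def
  set G : ℝ × AddCircle (2:ℝ) → ℝ≥0∞ :=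
    fun z => ENNReal.ofReal |φ z.1 z.2| with hG_def
  have hFmeas : Measurable F := by
    apply ENNReal.measurable_ofReal.comp
    exact hp_meas.comp ((measurable_const.sub measurable_fst).prodMk
      (measurable_const.sub measurable_snd))
  have hGmeas : Measurable G := by
    apply ENNReal.measurable_ofReal.comp
    exact hφ_meas.abs
  -- a.e. membership in the open interval
  have haeIoo : ∀ᵐ s ∂volume.restrict (Set.Ioc (0:ℝ) t), s ∈ Set.Ioo (0:ℝ) t := by
    rw [Measure.restrict_congr_set Ioo_ae_eq_Ioc.symm]
    exact ae_restrict_mem measurableSet_Ioo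
  -- the kernel is a probability density
  have hp_prob : ∀ u ∈ Set.Ioc (0:ℝ) T, ∫⁻ y, ENNReal.ofReal (p u (x - y)) = 1 := by
    intro u hu
    have hmeasy : Measurable fun y : AddCircle (2:ℝ) => p u (x - y) :=
      hp_meas.comp (measurable_const.prodMk (measurable_const.sub measurable_id))
    have hint : Integrable (fun y : AddCircle (2:ℝ) => p u (x - y)) volume := by
      refine Integrable.mono' (integrable_const (2 * max (u ^ (-(1:ℝ)/2)) 1))
        hmeasy.aestronglyMeasurable ?_
      refine Filter.Eventually.of_forall fun y => ?_
      rw [Real.norm_eq_abs, abs_of_nonneg (hp_nonneg u hu _)]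
      exact hp_sup u hu _
    rw [← ofReal_integral_eq_lintegral_ofReal hint
      (Filter.Eventually.of_forall fun y => hp_nonneg u hu _)]
    rw [integral_sub_left_eq_self (p u) volume x, hp_int u hu, ENNReal.ofReal_one]
  -- pointwise (in s) bound for the kernel part
  have hFy : ∀ s ∈ Set.Ioo (0:ℝ) t,
      (∫⁻ y, ENNReal.ofReal (p (t - s) (x - y)) ^ kp)
        ≤ ENNReal.ofReal (2 ^ b * ((t - s) ^ (-a') + 1)) := by
    intro s hs
    have hu : t - s ∈ Set.Ioc (0:ℝ) T := ⟨by linarith [hs.2], by linarith [hs.1]⟩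
    have hu0 : (0:ℝ) ≤ t - s := by linarith [hs.2]
    set u : ℝ := t - s with hu_def
    set M : ℝ≥0∞ := ENNReal.ofReal (2 * max (u ^ (-(1:ℝ)/2)) 1) with hM_def
    have hmeasy : Measurable fun y : AddCircle (2:ℝ) => ENNReal.ofReal (p u (x - y)) :=
      ENNReal.measurable_ofReal.comp
        (hp_meas.comp (measurable_const.prodMk (measurable_const.sub measurable_id)))
    have hptw : ∀ y, (ENNReal.ofReal (p u (x - y))) ^ kp
        ≤ M ^ b * ENNReal.ofReal (p u (x - y)) := by
      intro y
      rcases eq_or_ne (ENNReal.ofReal (p u (x - y))) 0 with h0 | h0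
      · rw [h0, ENNReal.zero_rpow_of_pos hconj.pos]
        exact zero_le
      · have hFM : ENNReal.ofReal (p u (x - y)) ≤ M :=
          ENNReal.ofReal_le_ofReal (hp_sup u hu _)
        calc (ENNReal.ofReal (p u (x - y))) ^ kp
            = (ENNReal.ofReal (p u (x - y))) ^ (b + 1) := by
              rw [show b + 1 = kp by rw [← hkp_sub]; ring]
          _ = (ENNReal.ofReal (p u (x - y))) ^ b
                * (ENNReal.ofReal (p u (x - y))) ^ (1:ℝ) :=
              ENNReal.rpow_add _ _ h0 ENNReal.ofReal_ne_top
          _ = (ENNReal.ofReal (p u (x - y))) ^ b * ENNReal.ofReal (p u (x - y)) := by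
              rw [ENNReal.rpow_one]
          _ ≤ M ^ b * ENNReal.ofReal (p u (x - y)) :=
              mul_le_mul_left (ENNReal.rpow_le_rpow hFM hb0.le) _
    have hMb : M ^ b ≤ ENNReal.ofReal (2 ^ b * (u ^ (-a') + 1)) := by
      rw [hM_def, ENNReal.ofReal_rpow_of_nonneg (by positivity) hb0.le]
      apply ENNReal.ofReal_le_ofReal
      rw [Real.mul_rpow (by norm_num) (le_max_of_le_right zero_le_one)]
      apply mul_le_mul_of_nonneg_left _ (by positivity)
      rcases le_total (u ^ (-(1:ℝ)/2)) 1 with h | h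
      · rw [max_eq_right h, Real.one_rpow]
        have : 0 ≤ u ^ (-a') := Real.rpow_nonneg hu0 _
        linarith
      · rw [max_eq_left h, ← Real.rpow_mul hu0,
          show (-(1:ℝ)/2) * b = -a' by rw [hab]; ring]
        linarith
    calc (∫⁻ y, ENNReal.ofReal (p u (x - y)) ^ kp)
        ≤ ∫⁻ y, M ^ b * ENNReal.ofReal (p u (x - y)) := lintegral_mono hptw
      _ = M ^ b * ∫⁻ y, ENNReal.ofReal (p u (x - y)) := lintegral_const_mul _ hmeasy
      _ = M ^ b := by rw [hp_prob u hu, mul_one]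
      _ ≤ ENNReal.ofReal (2 ^ b * (u ^ (-a') + 1)) := hMb
  -- integrability of the singular factor
  have hrpow_int : IntervalIntegrable (fun u : ℝ => u ^ (-a')) volume 0 t :=
    intervalIntegral.intervalIntegrable_rpow' (by linarith)
  have hsub_int : IntervalIntegrable (fun s : ℝ => (t - s) ^ (-a')) volume 0 t := by
    have h := (hrpow_int.comp_sub_left t).symm
    simpa using h
  have hIoc_int : IntegrableOn (fun s : ℝ => (t - s) ^ (-a')) (Set.Ioc 0 t) volume :=
    (intervalIntegrable_iff_integrableOn_Ioc_of_le h0t.le).mp hsub_int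
  have hconst_int : IntegrableOn (fun _ : ℝ => (1:ℝ)) (Set.Ioc 0 t) volume := by
    refine integrableOn_const ?_
    rw [Real.volume_Ioc]; exact ENNReal.ofReal_lt_top.ne
  have hg_int : IntegrableOn (fun s : ℝ => 2 ^ b * ((t - s) ^ (-a') + 1))
      (Set.Ioc 0 t) volume := (hIoc_int.add hconst_int).const_mul _
  have hg_nn : 0 ≤ᵐ[volume.restrict (Set.Ioc (0:ℝ) t)]
      fun s : ℝ => 2 ^ b * ((t - s) ^ (-a') + 1) := by
    filter_upwards [ae_restrict_mem measurableSet_Ioc] with s hs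
    have h1 : (0:ℝ) ≤ (t - s) ^ (-a') := Real.rpow_nonneg (by linarith [hs.2]) _
    have h2 : (0:ℝ) ≤ (2:ℝ) ^ b := by positivity
    simp only [Pi.zero_apply]
    nlinarith
  have hval : ∫ s in Set.Ioc (0:ℝ) t, (t - s) ^ (-a') = t ^ (1 - a') / (1 - a') := by
    rw [← intervalIntegral.integral_of_le h0t.le,
      intervalIntegral.integral_comp_sub_left (fun u : ℝ => u ^ (-a')) t,
      sub_zero, sub_self,
      integral_rpow (Or.inl (by linarith)),
      Real.zero_rpow (by linarith : -a' + 1 ≠ 0),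
      show -a' + 1 = 1 - a' by ring, sub_zero]
  have hint_val : ∫ s in Set.Ioc (0:ℝ) t, 2 ^ b * ((t - s) ^ (-a') + 1)
      = 2 ^ b * (t ^ (1 - a') / (1 - a') + t) := by
    rw [integral_const_mul, integral_add hIoc_int hconst_int, hval,
      setIntegral_const, measureReal_def, Real.volume_Ioc, smul_eq_mul, mul_one, sub_zero,
      ENNReal.toReal_ofReal h0t.le]
  have hAr_real : ∫ s in Set.Ioc (0:ℝ) t, 2 ^ b * ((t - s) ^ (-a') + 1)
      ≤ 2 ^ b * (2 * t ^ (1 - a') + t) := by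
    rw [hint_val]
    have hta : (0:ℝ) ≤ t ^ (1 - a') := Real.rpow_nonneg h0t.le _
    have h2 : t ^ (1 - a') / (1 - a') ≤ 2 * t ^ (1 - a') := by
      rw [div_le_iff₀ (by linarith : (0:ℝ) < 1 - a')]
      nlinarith
    have h3 : (0:ℝ) ≤ (2:ℝ) ^ b := by positivity
    nlinarith
  -- the kernel Lᵖ' bound
  have hA : (∫⁻ z, F z ^ kp ∂μt) ≤ ENNReal.ofReal (2 ^ b * (2 * t ^ (1 - a') + t)) := by
    rw [lintegral_prod _ ((hFmeas.pow measurable_const).aemeasurable)]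
    calc ∫⁻ s in Set.Ioc (0:ℝ) t, ∫⁻ y, F (s, y) ^ kp
        ≤ ∫⁻ s in Set.Ioc (0:ℝ) t, ENNReal.ofReal (2 ^ b * ((t - s) ^ (-a') + 1)) := by
          refine lintegral_mono_ae ?_
          filter_upwards [haeIoo] with s hs
          exact hFy s hs
      _ = ENNReal.ofReal (∫ s in Set.Ioc (0:ℝ) t, 2 ^ b * ((t - s) ^ (-a') + 1)) :=
          (ofReal_integral_eq_lintegral_ofReal hg_int hg_nn).symm
      _ ≤ _ := ENNReal.ofReal_le_ofReal hAr_real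
  -- the φ part
  have hφk_int : Integrable (fun z : ℝ × AddCircle (2:ℝ) => |φ z.1 z.2| ^ k)
      ((volume.restrict (Set.Icc (0:ℝ) T)).prod volume) := by
    have h := hφ.integrable_norm_rpow
      (by simp only [ne_eq, ENNReal.ofReal_eq_zero, not_le]; linarith)
      ENNReal.ofReal_ne_top
    simpa [ENNReal.toReal_ofReal hk0.le, Real.norm_eq_abs, Function.uncurry] using h
  have hGk : ∀ z : ℝ × AddCircle (2:ℝ), G z ^ k = ENNReal.ofReal (|φ z.1 z.2| ^ k) :=
    fun z => ENNReal.ofReal_rpow_of_nonneg (abs_nonneg _) hk0.le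
  have hB : (∫⁻ z, G z ^ k ∂μt) ≤ ENNReal.ofReal Φ := by
    have hGkmeas : Measurable fun z : ℝ × AddCircle (2:ℝ) => G z ^ k :=
      hGmeas.pow measurable_const
    calc (∫⁻ z, G z ^ k ∂μt)
        = ∫⁻ s in Set.Ioc (0:ℝ) t, ∫⁻ y, G (s, y) ^ k :=
          lintegral_prod _ hGkmeas.aemeasurable
      _ ≤ ∫⁻ s in Set.Icc (0:ℝ) T, ∫⁻ y, G (s, y) ^ k :=
          lintegral_mono_set ((Set.Ioc_subset_Icc_self).trans
            (Set.Icc_subset_Icc_right htT))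
      _ = ∫⁻ z, G z ^ k ∂((volume.restrict (Set.Icc (0:ℝ) T)).prod volume) :=
          (lintegral_prod _ hGkmeas.aemeasurable).symm
      _ = ∫⁻ z, ENNReal.ofReal (|φ z.1 z.2| ^ k)
            ∂((volume.restrict (Set.Icc (0:ℝ) T)).prod volume) := by
          exact lintegral_congr hGk
      _ = ENNReal.ofReal (∫ z, |φ z.1 z.2| ^ k
            ∂((volume.restrict (Set.Icc (0:ℝ) T)).prod volume)) :=
          (ofReal_integral_eq_lintegral_ofReal hφk_int
            (Filter.Eventually.of_forall fun z => by positivity)).symm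
      _ = ENNReal.ofReal Φ := by
          rw [integral_prod _ hφk_int]
  -- Hölder
  have hHolder := ENNReal.lintegral_mul_le_Lp_mul_Lq μt hconj
    hFmeas.aemeasurable hGmeas.aemeasurable
  set Ar : ℝ := 2 ^ b * (2 * t ^ (1 - a') + t) with hAr_def
  have hAr0 : 0 ≤ Ar := by
    have := Real.rpow_nonneg h0t.le (1 - a')
    positivity
  have hA' : (∫⁻ z, F z ^ kp ∂μt) ^ (1/kp) ≤ ENNReal.ofReal (Ar ^ c) := by
    calc (∫⁻ z, F z ^ kp ∂μt) ^ (1/kp)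
        ≤ (ENNReal.ofReal Ar) ^ (1/kp) :=
          ENNReal.rpow_le_rpow hA hconj.one_div_nonneg
      _ = ENNReal.ofReal (Ar ^ (1/kp)) :=
          ENNReal.ofReal_rpow_of_nonneg hAr0 hconj.one_div_nonneg
      _ = _ := by rw [hinv_kp]
  have hB' : (∫⁻ z, G z ^ k ∂μt) ^ (1/k) ≤ ENNReal.ofReal (Φ ^ (1/k)) := by
    calc (∫⁻ z, G z ^ k ∂μt) ^ (1/k)
        ≤ (ENNReal.ofReal Φ) ^ (1/k) :=
          ENNReal.rpow_le_rpow hB (by positivity)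
      _ = ENNReal.ofReal (Φ ^ (1/k)) :=
          ENNReal.ofReal_rpow_of_nonneg hΦ0 (by positivity)
  have hL2 : (∫⁻ z, F z * G z ∂μt)
      ≤ ENNReal.ofReal (Ar ^ c) * ENNReal.ofReal (Φ ^ (1/k)) := by
    refine le_trans ?_ (mul_le_mul' hA' hB')
    simpa [Pi.mul_apply] using hHolder
  have hLne : (∫⁻ z, F z * G z ∂μt) ≠ ⊤ :=
    (lt_of_le_of_lt hL2 (ENNReal.mul_lt_top ENNReal.ofReal_lt_top
      ENNReal.ofReal_lt_top)).ne
  -- from the real iterated integral to the product lintegral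
  have hH_meas : Measurable fun s : ℝ => ∫⁻ y, F (s, y) * G (s, y) :=
    (hFmeas.mul hGmeas).lintegral_prod_right'
  have hprod_eq : ∫⁻ s in Set.Ioc (0:ℝ) t, ∫⁻ y, F (s, y) * G (s, y)
      = ∫⁻ z, F z * G z ∂μt :=
    (lintegral_prod _ ((hFmeas.mul hGmeas).aemeasurable)).symm
  have hHint : Integrable (fun s : ℝ => (∫⁻ y, F (s, y) * G (s, y)).toReal)
      (volume.restrict (Set.Ioc (0:ℝ) t)) := by
    apply integrable_toReal_of_lintegral_ne_top hH_meas.aemeasurable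
    rw [hprod_eq]; exact hLne
  have key1 : ∀ᵐ s ∂volume.restrict (Set.Ioc (0:ℝ) t),
      |∫ y, p (t - s) (x - y) * φ s y| ≤ (∫⁻ y, F (s, y) * G (s, y)).toReal := by
    filter_upwards [haeIoo] with s hs
    have hu : t - s ∈ Set.Ioc (0:ℝ) T := ⟨by linarith [hs.2], by linarith [hs.1]⟩
    have hmphi : Measurable fun y : AddCircle (2:ℝ) => p (t - s) (x - y) * |φ s y| :=
      (hp_meas.comp (measurable_const.prodMk (measurable_const.sub measurable_id))).mul
        ((hφ_meas.comp (measurable_const.prodMk measurable_id)).abs)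
    calc |∫ y, p (t - s) (x - y) * φ s y|
        ≤ ∫ y, |p (t - s) (x - y)| * |φ s y| := by
          simpa [Real.norm_eq_abs] using
            norm_integral_le_integral_norm (fun y => p (t - s) (x - y) * φ s y)
      _ = ∫ y, p (t - s) (x - y) * |φ s y| := by
          refine integral_congr_ae (Filter.Eventually.of_forall fun y => ?_)
          have habs : |p (t - s) (x - y)| = p (t - s) (x - y) :=
            abs_of_nonneg (hp_nonneg _ hu _)
          simp only [habs]
      _ = (∫⁻ y, ENNReal.ofReal (p (t - s) (x - y) * |φ s y|)).toReal := by
          rw [integral_eq_lintegral_of_nonneg_ae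
            (Filter.Eventually.of_forall fun y =>
              mul_nonneg (hp_nonneg _ hu _) (abs_nonneg _))
            hmphi.aestronglyMeasurable]
      _ = (∫⁻ y, F (s, y) * G (s, y)).toReal := by
          congr 1
          refine lintegral_congr fun y => ?_
          rw [ENNReal.ofReal_mul (hp_nonneg _ hu _)]
  have step1 : |∫ s in Set.Ioc (0:ℝ) t, ∫ y, p (t - s) (x - y) * φ s y|
      ≤ ∫ s in Set.Ioc (0:ℝ) t, (∫⁻ y, F (s, y) * G (s, y)).toReal := by
    calc |∫ s in Set.Ioc (0:ℝ) t, ∫ y, p (t - s) (x - y) * φ s y|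
        ≤ ∫ s in Set.Ioc (0:ℝ) t, |∫ y, p (t - s) (x - y) * φ s y| := by
          simpa [Real.norm_eq_abs] using
            norm_integral_le_integral_norm
              (fun s => ∫ y, p (t - s) (x - y) * φ s y)
              (μ := volume.restrict (Set.Ioc (0:ℝ) t))
      _ ≤ _ := integral_mono_of_nonneg
          (Filter.Eventually.of_forall fun s => abs_nonneg _) hHint key1
  have step2 : ∫ s in Set.Ioc (0:ℝ) t, (∫⁻ y, F (s, y) * G (s, y)).toReal
      = (∫⁻ z, F z * G z ∂μt).toReal := by
    rw [integral_toReal hH_meas.aemeasurable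
      (ae_lt_top hH_meas (by rw [hprod_eq]; exact hLne))]
    rw [hprod_eq]
  -- the power-max estimate
  have hArc : Ar ^ c ≤ 3 * max (T ^ e0) T := by
    have hmax0 : (0:ℝ) ≤ max (t ^ (1 - a')) t :=
      le_trans h0t.le (le_max_right _ _)
    have hAr_le : Ar ≤ 2 ^ b * (3 * max (t ^ (1 - a')) t) := by
      have h1 := le_max_left (t ^ (1 - a')) t
      have h2 := le_max_right (t ^ (1 - a')) t
      have h3 : (0:ℝ) ≤ (2:ℝ) ^ b := by positivity
      rw [hAr_def]
      nlinarith
    have hmaxc : (max (t ^ (1 - a')) t) ^ c ≤ max (T ^ e0) T := by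
      rcases le_total (t ^ (1 - a')) t with h | h
      · rw [max_eq_right h]
        exact aux_rpow_le_max he00 he0c hc1 h0t htT
      · rw [max_eq_left h, ← Real.rpow_mul h0t.le,
          show (1 - a') * c = e0 by
            rw [ha_def, hc_def, he0_def]; field_simp; ring]
        exact aux_rpow_le_max he00 le_rfl (le_trans he0c hc1) h0t htT
    calc Ar ^ c ≤ (2 ^ b * (3 * max (t ^ (1 - a')) t)) ^ c :=
          Real.rpow_le_rpow hAr0 hAr_le hc0.le
      _ = ((2:ℝ) ^ b) ^ c * ((3:ℝ) ^ c * (max (t ^ (1 - a')) t) ^ c) := by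
          rw [Real.mul_rpow (by positivity) (by positivity),
            Real.mul_rpow (by norm_num) hmax0]
      _ = (2:ℝ) ^ (1/k) * ((3:ℝ) ^ c * (max (t ^ (1 - a')) t) ^ c) := by
          rw [← Real.rpow_mul (by norm_num : (0:ℝ) ≤ 2),
            show b * c = 1/k by rw [hb_def, hc_def]; field_simp]
      _ ≤ (3:ℝ) ^ (1/k) * ((3:ℝ) ^ c * (max (t ^ (1 - a')) t) ^ c) := by
          apply mul_le_mul_of_nonneg_right
            (Real.rpow_le_rpow (by norm_num) (by norm_num) (by positivity))
          positivity
      _ = (3:ℝ) ^ ((1/k) + c) * (max (t ^ (1 - a')) t) ^ c := by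
          rw [Real.rpow_add (by norm_num : (0:ℝ) < 3)]; ring
      _ = 3 * (max (t ^ (1 - a')) t) ^ c := by
          rw [show (1/k) + c = 1 by rw [hc_def]; field_simp; ring, Real.rpow_one]
      _ ≤ 3 * max (T ^ e0) T := by linarith
  -- conclusion
  calc |∫ s in Set.Ioc (0:ℝ) t, ∫ y, p (t - s) (x - y) * φ s y|
      ≤ (∫⁻ z, F z * G z ∂μt).toReal := step1.trans_eq step2
    _ ≤ (ENNReal.ofReal (Ar ^ c) * ENNReal.ofReal (Φ ^ (1/k))).toReal :=
        ENNReal.toReal_mono (ENNReal.mul_lt_top ENNReal.ofReal_lt_top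
          ENNReal.ofReal_lt_top).ne hL2
    _ = Ar ^ c * Φ ^ (1/k) := by
        rw [← ENNReal.ofReal_mul (Real.rpow_nonneg hAr0 _),
          ENNReal.toReal_ofReal (mul_nonneg (Real.rpow_nonneg hAr0 _) hΦk0)]
    _ ≤ (3 * max (T ^ e0) T) * Φ ^ (1/k) :=
        mul_le_mul_of_nonneg_right hArc hΦk0
    _ = 3 * Φ ^ (1/k) * max (T ^ e0) T := by ring
end
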